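/- Let (N∪C, d) be a pseudo-metric space with agent set N of size n and two alternatives a, b. Suppose a subset A ⊆ N of size k satisfies: d(i,a)=3−ε and d(i,b)=3 for all i∈A, and d(i,a)=5−ε and d(i,b)=1 for all i∈N∖A, with d(a,b)=4−ε and all pairwise agent distances equal to 2 (for 0<ε<1). Then these distances satisfy the triangle inequality, alternative a minimizes total distance to A, and the ratio SC(a)/SC(b) of total distances to all of N satisfies SC(a)/SC(b) ≥ 5 − 12k/(n+2k) − ε. -/
import Mathlib


/-- lower bound instance for deterministic selection: agents
`Fin n`, alternatives `a = Sum.inr 0`, `b = Sum.inr 1`, panel `A` of size `k`,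
with `d(i,a) = 3−ε`, `d(i,b) = 3` for `i ∈ A`, `d(i,a) = 5−ε`, `d(i,b) = 1`
for `i ∉ A`, `d(a,b) = 4−ε`, and pairwise agent distances `2`. These distances
satisfy the triangle inequality, `a` minimizes the total distance to the panel
`A`, and `SC(a)/SC(b) ≥ 5 − 12k/(n+2k) − ε`. -/
theorem stmt_0 (n k : ℕ) (hn : 0 < n) (hkn : k ≤ n)
    (ε : ℝ) (hε0 : 0 < ε) (hε1 : ε < 1)
    (A : Finset (Fin n)) (hA : A.card = k)
    (d : (Fin n ⊕ Fin 2) → (Fin n ⊕ Fin 2) → ℝ)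
    (hd_agents : ∀ i j : Fin n, d (Sum.inl i) (Sum.inl j) = if i = j then 0 else 2)
    (hd_a : ∀ i : Fin n,
      d (Sum.inl i) (Sum.inr 0) = (if i ∈ A then 3 - ε else 5 - ε) ∧
      d (Sum.inr 0) (Sum.inl i) = (if i ∈ A then 3 - ε else 5 - ε))
    (hd_b : ∀ i : Fin n,
      d (Sum.inl i) (Sum.inr 1) = (if i ∈ A then 3 else 1) ∧
      d (Sum.inr 1) (Sum.inl i) = (if i ∈ A then 3 else 1))
    (hd_alt : ∀ c c' : Fin 2,
      d (Sum.inr c) (Sum.inr c') = if c = c' then 0 else 4 - ε) :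
    (∀ x y z, d x y ≤ d x z + d z y) ∧
    (∑ i ∈ A, d (Sum.inl i) (Sum.inr 0) ≤ ∑ i ∈ A, d (Sum.inl i) (Sum.inr 1)) ∧
    ((∑ i : Fin n, d (Sum.inl i) (Sum.inr 0)) /
        (∑ i : Fin n, d (Sum.inl i) (Sum.inr 1)) ≥
      5 - 12 * (k : ℝ) / ((n : ℝ) + 2 * k) - ε) := by

  have hSCa : (∑ i : Fin n, d (Sum.inl i) (Sum.inr 0)) = (5 - ε) * n - 2 * k := by
    have : ∀ i : Fin n, d (Sum.inl i) (Sum.inr 0) = (5 - ε) - (if i ∈ A then 2 else 0) := by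
      intro i
      rw [(hd_a i).1]
      split_ifs <;> ring
    rw [Finset.sum_congr rfl fun i _ => this i, Finset.sum_sub_distrib,
      Finset.sum_ite_mem, Finset.univ_inter, Finset.sum_const, Finset.sum_const, hA]
    simp [Finset.card_univ]
    ring
  have hSCb : (∑ i : Fin n, d (Sum.inl i) (Sum.inr 1)) = (n : ℝ) + 2 * k := by
    have : ∀ i : Fin n, d (Sum.inl i) (Sum.inr 1) = 1 + (if i ∈ A then 2 else 0) := by
      intro i
      rw [(hd_b i).1]
      split_ifs <;> ring
    rw [Finset.sum_congr rfl fun i _ => this i, Finset.sum_add_distrib,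
      Finset.sum_ite_mem, Finset.univ_inter, Finset.sum_const, Finset.sum_const, hA]
    simp [Finset.card_univ]
    ring
  have h2 : ∀ c : Fin 2, c = 0 ∨ c = 1 := by decide
  refine ⟨?_, ?_, ?_⟩
  · intro x y z
    have ha1 : ∀ i : Fin n, d (Sum.inl i) (Sum.inr 0) = (if i ∈ A then 3 - ε else 5 - ε) :=
      fun i => (hd_a i).1
    have ha2 : ∀ i : Fin n, d (Sum.inr 0) (Sum.inl i) = (if i ∈ A then 3 - ε else 5 - ε) :=
      fun i => (hd_a i).2
    have hb1 : ∀ i : Fin n, d (Sum.inl i) (Sum.inr 1) = (if i ∈ A then 3 else 1) :=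
      fun i => (hd_b i).1
    have hb2 : ∀ i : Fin n, d (Sum.inr 1) (Sum.inl i) = (if i ∈ A then 3 else 1) :=
      fun i => (hd_b i).2
    rcases x with i | cx <;> rcases y with j | cy <;> rcases z with l | cz
    all_goals try rcases h2 cx with rfl | rfl
    all_goals try rcases h2 cy with rfl | rfl
    all_goals try rcases h2 cz with rfl | rfl
    all_goals simp only [ha1, ha2, hb1, hb2, hd_agents, hd_alt]
    all_goals split_ifs <;>
      first
        | linarith
        | exact absurd ‹(0 : Fin 2) = 1› (by decide)
        | exact absurd ‹(1 : Fin 2) = 0› (by decide)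
        | simp_all
        | (simp_all; linarith)
  · apply Finset.sum_le_sum
    intro i hi
    rw [(hd_a i).1, (hd_b i).1, if_pos hi, if_pos hi]
    linarith
  · rw [hSCa, hSCb]
    have hden : (0 : ℝ) < (n : ℝ) + 2 * k := by positivity
    rw [ge_iff_le, le_div_iff₀ hden]
    have h12 : 12 * (k : ℝ) / ((n : ℝ) + 2 * k) * ((n : ℝ) + 2 * k) = 12 * k :=
      div_mul_cancel₀ _ (ne_of_gt hden)
    nlinarith [mul_nonneg hε0.le (Nat.cast_nonneg k : (0:ℝ) ≤ (k:ℝ))]
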